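/- Let O be the ring of integers of an imaginary quadratic field K and let P be a nonzero prime ideal of O. Then the congruence subgroup Γ_0(P) = { [[a,b],[c,d]] ∈ SL_2(O) : c ∈ P } is not contained in Γ(u,v) = { A ∈ SL_2(O) : (u,v)A = (u,v) } for any nonzero pair (u,v) ∈ (C/K)^2. -/
import Mathlib


open Matrix
set_option synthInstance.maxHeartbeats 1000000
set_option maxHeartbeats 1000000

/-- `Γ₀(P)` is not contained in `Γ(u,v)` for any nonzero `(u,v) ∈ (ℂ/K)²`. -/
theorem gamma0_not_subset_stabilizer
    (K : Subfield ℂ)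
    -- `K` is quadratic over `ℚ`
    (hquad : Module.finrank ℚ ↥K = 2)
    -- `K` is imaginary
    (himag : ∃ z ∈ K, z.im ≠ 0)
    (P : Ideal (integralClosure ℤ ↥K)) (hP : P.IsPrime) (hPne : P ≠ ⊥)
    -- a nonzero element `(u,v)` of `(ℂ/K)²`, represented by lifts `u v : ℂ`
    (u v : ℂ) (huv : u ∉ K ∨ v ∉ K) :
    ∃ A : Matrix.SpecialLinearGroup (Fin 2) (integralClosure ℤ ↥K),
      -- `A ∈ Γ₀(P)`
      A.1 1 0 ∈ P ∧
      -- `A ∉ Γ(u,v)`, i.e. `(u,v)A ≠ (u,v)` in `(ℂ/K)²`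
      ¬ ((u * ((A.1 0 0 : ↥K) : ℂ) + v * ((A.1 1 0 : ↥K) : ℂ) - u ∈ K) ∧
         (u * ((A.1 0 1 : ↥K) : ℂ) + v * ((A.1 1 1 : ↥K) : ℂ) - v ∈ K)) := by
  rcases huv with hu | hv
  · -- use A = [[1,1],[0,1]]
    refine ⟨⟨!![1,1;0,1], by simp [Matrix.det_fin_two_of]⟩, ?_, ?_⟩
    · simp
    · rintro ⟨-, h2⟩
      apply hu
      simpa using h2
  · -- use A = [[1,0],[p,1]] with p ∈ P nonzero
    have hex : ∃ p, p ∈ P ∧ p ≠ 0 := by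
      by_contra h
      push_neg at h
      exact hPne (by
        ext x
        simp only [Ideal.mem_bot]
        exact ⟨fun hx => h x hx, fun hx => hx ▸ P.zero_mem⟩)
    obtain ⟨p, hpP, hp0⟩ := hex
    refine ⟨⟨!![1,0;p,1], by simp [Matrix.det_fin_two_of]⟩, ?_, ?_⟩
    · simpa using hpP
    · rintro ⟨h1, -⟩
      apply hv
      have hc : ((p : ↥K) : ℂ) ∈ K := (p : ↥K).2
      have hcne : ((p : ↥K) : ℂ) ≠ 0 := by
        simpa using hp0
      have h1' : v * ((p : ↥K) : ℂ) ∈ K := by simpa using h1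
      have := K.div_mem h1' hc
      rwa [mul_div_assoc, div_self hcne, mul_one] at this
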